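/- (Quantifier elimination) Let ψ be a generalized Kracht formula with free variables such that in every atom y ∈ E occurring in ψ, all variables occurring in E are free variables of ψ. Then ψ is equivalent (in every Kripke frame, under every assignment of its free variables, with atoms read via the # translation) to a quantifier-free formula built from atoms x_l ∈ E' with E' quasi-safe, using only ∧ and ∨. -/

import Mathlib

set_option autoImplicit true

universe u v w

/-- Modal formulas over modality indices `Λ` and propositional variables `V`. -/
inductive MF (Λ : Type u) (V : Type v) : Type (max u v)
  | var : V → MF Λ V
  | top : MF Λ V
  | bot : MF Λ V
  | and : MF Λ V → MF Λ V → MF Λ V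
  | or  : MF Λ V → MF Λ V → MF Λ V
  | neg : MF Λ V → MF Λ V
  | imp : MF Λ V → MF Λ V → MF Λ V
  | dia : Λ → MF Λ V → MF Λ V
  | box : Λ → MF Λ V → MF Λ V

namespace MF
variable {Λ : Type u} {V : Type v}

/-- The set of propositional variables occurring in a modal formula. -/
def vars : MF Λ V → Set V
  | var p => {p}
  | top => ∅
  | bot => ∅
  | and a b => vars a ∪ vars b
  | or a b => vars a ∪ vars b
  | neg a => vars a
  | imp a b => vars a ∪ vars b
  | dia _ a => vars a
  | box _ a => vars a

end MF

/-- Positive modal formulas: built without `¬` and `→`. -/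
inductive Positive {Λ : Type u} {V : Type v} : MF Λ V → Prop
  | var (p : V) : Positive (.var p)
  | top : Positive .top
  | bot : Positive .bot
  | and {a b} : Positive a → Positive b → Positive (.and a b)
  | or {a b} : Positive a → Positive b → Positive (.or a b)
  | dia (l) {a} : Positive a → Positive (.dia l a)
  | box (l) {a} : Positive a → Positive (.box l a)

/-- A Kripke frame with accessibility relations indexed by `Λ`. -/
structure Frame (Λ : Type u) where
  W : Type w
  R : Λ → W → W → Prop

/-- Kripke satisfaction `F, x, θ ⊨ φ`. -/
def sat {Λ : Type u} {V : Type v} (F : Frame Λ) (θ : V → Set F.W) : F.W → MF Λ V → Prop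
  | x, .var p => x ∈ θ p
  | _, .top => True
  | _, .bot => False
  | x, .and a b => sat F θ x a ∧ sat F θ x b
  | x, .or a b => sat F θ x a ∨ sat F θ x b
  | x, .neg a => ¬ sat F θ x a
  | x, .imp a b => sat F θ x a → sat F θ x b
  | x, .dia l a => ∃ y, F.R l x y ∧ sat F θ y a
  | x, .box l a => ∀ y, F.R l x y → sat F θ y a

/-- `BoxF φ p S`: `φ` is a box-formula with head `p`, in which the set of variables
occurring not as the head is `S`. -/
inductive BoxF {Λ : Type u} {V : Type v} : MF Λ V → V → Set V → Prop
  | var (p : V) : BoxF (.var p) p ∅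
  | imp {POS ψ p S} : Positive POS → BoxF ψ p S → BoxF (.imp POS ψ) p (MF.vars POS ∪ S)
  | box (l) {ψ p S} : BoxF ψ p S → BoxF (.box l ψ) p S

/-- `RegBF r φ p`: relative to the rank assignment `r`, `φ` is a regular box-formula
with head `p` (of rank `r p`): all variables of the positive antecedents have rank `< r p`. -/
inductive RegBF {Λ : Type u} {V : Type v} (r : V → ℕ) : MF Λ V → V → Prop
  | var (p : V) : RegBF r (.var p) p
  | imp {POS ψ p} : Positive POS → (∀ q ∈ MF.vars POS, r q < r p) →
      RegBF r ψ p → RegBF r (.imp POS ψ) p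
  | box (l) {ψ p} : RegBF r ψ p → RegBF r (.box l ψ) p

/-- The edge relation of the dependency graph of a set `A` of box-formulas:
`p → q` iff `p` occurs (not as the head) in some member of `A` with head `q`. -/
def depEdge {Λ : Type u} {V : Type v} (A : Set (MF Λ V)) (p q : V) : Prop :=
  ∃ φ ∈ A, ∃ S, BoxF φ q S ∧ p ∈ S

/-- A set of box-formulas is regular if its dependency graph has no oriented cycle. -/
def RegularSet {Λ : Type u} {V : Type v} (A : Set (MF Λ V)) : Prop :=
  ∀ p : V, ¬ Relation.TransGen (depEdge A) p p

/-- `R_λ^{-1}(A) = {u : ∃ v, u R_λ v ∧ v ∈ A}`. -/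
def Rinv {Λ : Type u} (F : Frame Λ) (l : Λ) (A : Set F.W) : Set F.W :=
  {u | ∃ v, F.R l u v ∧ v ∈ A}

/-- `R_λ^□(A) = {u : ∀ v, u R_λ v → v ∈ A}`. -/
def RboxOp {Λ : Type u} (F : Frame Λ) (l : Λ) (A : Set F.W) : Set F.W :=
  {u | ∀ v, F.R l u v → v ∈ A}

/-- `R_λ(A) = {u : ∃ v, v R_λ u ∧ v ∈ A}`. -/
def Rfwd {Λ : Type u} (F : Frame Λ) (l : Λ) (A : Set F.W) : Set F.W :=
  {u | ∃ v, F.R l v u ∧ v ∈ A}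

/-- The interpretation of the expression `KP^{POS}` in a frame `F`, the set variables
`P^l_i` being interpreted by `P`.  (Junk value `∅` on non-positive constructors.) -/
def KPsem {Λ : Type u} (F : Frame Λ) (P : ℕ × ℕ → Set F.W) : MF Λ (ℕ × ℕ) → Set F.W
  | .var q => P q
  | .top => Set.univ
  | .bot => ∅
  | .and a b => KPsem F P a ∩ KPsem F P b
  | .or a b => KPsem F P a ∪ KPsem F P b
  | .dia l a => Rinv F l (KPsem F P a)
  | .box l a => RboxOp F l (KPsem F P a)
  | .neg _ => ∅
  | .imp _ _ => ∅

/-- The interpretation of the expression `KV^φ` in a frame `F`: the set variables `P^l_i`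
are interpreted by `P` and the extra variable `#` by the second argument.
(Junk value `∅` on constructors that do not occur in regular box-formulas.) -/
def KVsem {Λ : Type u} (F : Frame Λ) (P : ℕ × ℕ → Set F.W) : MF Λ (ℕ × ℕ) → Set F.W → Set F.W
  | .var _, X => X
  | .imp POS ψ, X => KVsem F P ψ (X ∩ KPsem F P POS)
  | .box l ψ, X => KVsem F P ψ (Rfwd F l X)
  | _, _ => ∅

/-- The semantic minimal valuation: given points `g j` and sets `f j` of regular
box-formulas to be verified at `g j`, `thetaMinSem F g f k i` is the minimal value of the
variable `p^k_i`; it is defined by recursion on the rank `k` as the union, over all `j` and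
all `φ ∈ f j` with head `p^k_i`, of `KV^φ(g j)` computed with the minimal values of the
variables of lower rank. -/
noncomputable def thetaMinSem {Λ : Type u} (F : Frame Λ) {ι : Type w} (g : ι → F.W)
    (f : ι → Set (MF Λ (ℕ × ℕ))) : ℕ → ℕ → Set F.W :=
  fun k => Nat.strongRecOn (motive := fun _ => ℕ → Set F.W) k fun k ih i =>
    ⋃ (j : ι), ⋃ φ ∈ f j, ⋃ (_ : RegBF Prod.fst φ (k, i)),
      KVsem F (fun q => if h : q.1 < k then ih q.1 h q.2 else ∅) φ {g j}

/-- `L`-expressions: terms of the language `L` with individual variables `x_i` (`i : ℕ`),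
constants `⊤, ⊥`, unary `R_λ^{-1}`, `R_λ^□`, `R_λ` and binary `∩`, `∪`. -/
inductive LExp (Λ : Type u) : Type u
  | var : ℕ → LExp Λ
  | top : LExp Λ
  | bot : LExp Λ
  | inter : LExp Λ → LExp Λ → LExp Λ
  | union : LExp Λ → LExp Λ → LExp Λ
  | rinv : Λ → LExp Λ → LExp Λ
  | rbox : Λ → LExp Λ → LExp Λ
  | rfw : Λ → LExp Λ → LExp Λ

namespace LExp
variable {Λ : Type u}

/-- Denotation of an `L`-expression in a frame `F`, the variable `x_i` denoting the
singleton of the point `g i`. -/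
def den (F : Frame Λ) (g : ℕ → F.W) : LExp Λ → Set F.W
  | var i => {g i}
  | top => Set.univ
  | bot => ∅
  | inter a b => den F g a ∩ den F g b
  | union a b => den F g a ∪ den F g b
  | rinv l a => Rinv F l (den F g a)
  | rbox l a => RboxOp F l (den F g a)
  | rfw l a => Rfwd F l (den F g a)

/-- The set of (indices of) individual variables occurring in an `L`-expression. -/
def evars : LExp Λ → Set ℕ
  | var i => {i}
  | top => ∅
  | bot => ∅
  | inter a b => evars a ∪ evars b
  | union a b => evars a ∪ evars b
  | rinv _ a => evars a
  | rbox _ a => evars a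
  | rfw _ a => evars a

end LExp

/-- The subexpression relation on `L`-expressions. -/
inductive Subexp {Λ : Type u} : LExp Λ → LExp Λ → Prop
  | refl (e : LExp Λ) : Subexp e e
  | interL {e a b} : Subexp e a → Subexp e (.inter a b)
  | interR {e a b} : Subexp e b → Subexp e (.inter a b)
  | unionL {e a b} : Subexp e a → Subexp e (.union a b)
  | unionR {e a b} : Subexp e b → Subexp e (.union a b)
  | rinv (l) {e a} : Subexp e a → Subexp e (.rinv l a)
  | rbox (l) {e a} : Subexp e a → Subexp e (.rbox l a)
  | rfw (l) {e a} : Subexp e a → Subexp e (.rfw l a)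

/-- `SafeFor e`: `e` is "safe for" the ambient expression, i.e. `e` is a variable, or
`R_λ(e')` with `e'` safe for it, or an intersection one of whose components is safe for it. -/
inductive SafeFor {Λ : Type u} : LExp Λ → Prop
  | var (i : ℕ) : SafeFor (.var i)
  | rfw (l) {a} : SafeFor a → SafeFor (.rfw l a)
  | interL {a b} : SafeFor a → SafeFor (.inter a b)
  | interR {a b} : SafeFor b → SafeFor (.inter a b)

/-- An `L`-expression is safe if it is safe for itself and the argument of every
subexpression of the form `R_λ(ψ)` is safe for it. -/
def Safe {Λ : Type u} (e : LExp Λ) : Prop :=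
  SafeFor e ∧ ∀ l a, Subexp (.rfw l a) e → SafeFor a

mutual
  /-- The class `K`: the least class of `L`-expressions containing the variables and closed
  under `S ↦ R_λ(S)` and `S ↦ S ∩ E` for `E` a positive combination of members of `K`. -/
  inductive InK {Λ : Type u} : LExp Λ → Prop
    | var (i : ℕ) : InK (.var i)
    | rfw (l : Λ) {S : LExp Λ} : InK S → InK (.rfw l S)
    | inter {S E : LExp Λ} : InK S → PosOfK E → InK (.inter S E)
  /-- Positive combinations of members of `K`: built from members of `K` using only
  `∩`, `∪`, `R_λ^{-1}`, `R_λ^□`, `⊤`, `⊥`. -/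
  inductive PosOfK {Λ : Type u} : LExp Λ → Prop
    | ofK {e : LExp Λ} : InK e → PosOfK e
    | top : PosOfK .top
    | bot : PosOfK .bot
    | inter {a b} : PosOfK a → PosOfK b → PosOfK (.inter a b)
    | union {a b} : PosOfK a → PosOfK b → PosOfK (.union a b)
    | rinv (l) {a} : PosOfK a → PosOfK (.rinv l a)
    | rbox (l) {a} : PosOfK a → PosOfK (.rbox l a)
end

/-- Quasi-safe `L`-expressions: positive combinations of safe expressions, i.e. built from
safe expressions using only `∩`, `∪`, `R_λ^{-1}`, `R_λ^□`, `⊤`, `⊥`. -/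
inductive QuasiSafe {Λ : Type u} : LExp Λ → Prop
  | safe {e : LExp Λ} : Safe e → QuasiSafe e
  | top : QuasiSafe .top
  | bot : QuasiSafe .bot
  | inter {a b} : QuasiSafe a → QuasiSafe b → QuasiSafe (.inter a b)
  | union {a b} : QuasiSafe a → QuasiSafe b → QuasiSafe (.union a b)
  | rinv (l) {a} : QuasiSafe a → QuasiSafe (.rinv l a)
  | rbox (l) {a} : QuasiSafe a → QuasiSafe (.rbox l a)

/-- `ReplOne i ψ φ φ'`: `φ'` is the result of replacing one occurrence of the variable
`x_i` in `φ` by `ψ`. -/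
inductive ReplOne {Λ : Type u} (i : ℕ) (ψ : LExp Λ) : LExp Λ → LExp Λ → Prop
  | here : ReplOne i ψ (.var i) ψ
  | interL {a a' b} : ReplOne i ψ a a' → ReplOne i ψ (.inter a b) (.inter a' b)
  | interR {a b b'} : ReplOne i ψ b b' → ReplOne i ψ (.inter a b) (.inter a b')
  | unionL {a a' b} : ReplOne i ψ a a' → ReplOne i ψ (.union a b) (.union a' b)
  | unionR {a b b'} : ReplOne i ψ b b' → ReplOne i ψ (.union a b) (.union a b')
  | rinv (l) {a a'} : ReplOne i ψ a a' → ReplOne i ψ (.rinv l a) (.rinv l a')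
  | rbox (l) {a a'} : ReplOne i ψ a a' → ReplOne i ψ (.rbox l a) (.rbox l a')
  | rfw (l) {a a'} : ReplOne i ψ a a' → ReplOne i ψ (.rfw l a) (.rfw l a')

/-- A finite union of `L`-expressions (empty union is `⊥`). -/
def unionList {Λ : Type u} : List (LExp Λ) → LExp Λ
  | [] => .bot
  | e :: es => .union e (unionList es)

/-- `UnionOfSafe e`: `e` is a finite union of safe expressions. -/
inductive UnionOfSafe {Λ : Type u} : LExp Λ → Prop
  | bot : UnionOfSafe .bot
  | safe {e : LExp Λ} : Safe e → UnionOfSafe e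
  | union {a b} : UnionOfSafe a → UnionOfSafe b → UnionOfSafe (.union a b)

/-- Syntactic `KP^{POS}`: the `L`-expression obtained from the positive formula `POS` by
replacing each set variable `P^l_i` by the `L`-expression `KF (l, i)`.
(Junk value on non-positive constructors.) -/
def KPsub {Λ : Type u} (KF : ℕ × ℕ → LExp Λ) : MF Λ (ℕ × ℕ) → LExp Λ
  | .var q => KF q
  | .top => .top
  | .bot => .bot
  | .and a b => .inter (KPsub KF a) (KPsub KF b)
  | .or a b => .union (KPsub KF a) (KPsub KF b)
  | .dia l a => .rinv l (KPsub KF a)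
  | .box l a => .rbox l (KPsub KF a)
  | .neg _ => .bot
  | .imp _ _ => .bot

/-- Syntactic `KVF^φ(t)`: the `L`-expression obtained from `KV^φ` by substituting the
`L`-expression `t` for `#` and `KF (l, i)` for each set variable `P^l_i`.
(Junk value on constructors that do not occur in regular box-formulas.) -/
def KVFsyn {Λ : Type u} (KF : ℕ × ℕ → LExp Λ) : MF Λ (ℕ × ℕ) → LExp Λ → LExp Λ
  | .var _, t => t
  | .imp POS ψ, t => KVFsyn KF ψ (.inter t (KPsub KF POS))
  | .box l ψ, t => KVFsyn KF ψ (.rfw l t)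
  | _, _ => .bot

open scoped Classical in
/-- The syntactic minimal valuation `KF_f^{p^k_i}` for variables `x_0, …, x_{n-1}` and
`f` assigning to each variable a finite set of regular box-formulas: defined by recursion on
the rank `k` as the union, over all `j < n` and all `φ ∈ f j` with head `p^k_i`, of
`KVF_f^φ(x_j)`, which is `KV^φ` with `x_j` substituted for `#` and `KF_f^{p^l_m}`
substituted for each `P^l_m` with `l < k`. -/
noncomputable def KFsyn {Λ : Type u} (n : ℕ) (f : ℕ → Finset (MF Λ (ℕ × ℕ))) :
    ℕ → ℕ → LExp Λ :=
  fun k => Nat.strongRecOn (motive := fun _ => ℕ → LExp Λ) k fun k ih i =>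
    unionList (((List.range n).flatMap fun j =>
      ((f j).toList.filter fun φ => decide (RegBF Prod.fst φ (k, i))).map fun φ =>
        KVFsyn (fun q => if h : q.1 < k then ih q.1 h q.2 else LExp.bot) φ (LExp.var j)))

/-- The expressions substituted for the set variables `P^l_m`, `l < k`, in `KVF`:
the syntactic minimal valuations of the lower ranks. -/
noncomputable def lowKF {Λ : Type u} (n : ℕ) (f : ℕ → Finset (MF Λ (ℕ × ℕ))) (k : ℕ) :
    ℕ × ℕ → LExp Λ :=
  fun q => if q.1 < k then KFsyn n f q.1 q.2 else LExp.bot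

/-- `KVFat n f φ j k` is the `L`-expression `KVF_f^φ(x_j)` for `φ` a regular box-formula
of rank `k`. -/
noncomputable def KVFat {Λ : Type u} (n : ℕ) (f : ℕ → Finset (MF Λ (ℕ × ℕ)))
    (φ : MF Λ (ℕ × ℕ)) (j k : ℕ) : LExp Λ :=
  KVFsyn (lowKF n f k) φ (.var j)

/-- A labelled tree-like structure: a set of vertices with relations indexed by `Λ`,
a root, and a label function assigning to every vertex a set of labels from `α`. -/
structure LabTree (Λ : Type u) (α : Type v) where
  V : Type
  R : Λ → V → V → Prop
  root : V
  label : V → Set α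

/-- Derivation trees witnessing that a formula is built from base formulas using only
`∧` and `◇_λ`. -/
inductive BuiltT (Λ : Type u) (V : Type v) : Type (max u v)
  | base : MF Λ V → BuiltT Λ V
  | and : BuiltT Λ V → BuiltT Λ V → BuiltT Λ V
  | dia : Λ → BuiltT Λ V → BuiltT Λ V

/-- The modal formula described by a derivation tree. -/
def BuiltT.formula {Λ : Type u} {V : Type v} : BuiltT Λ V → MF Λ V
  | base φ => φ
  | and a b => .and a.formula b.formula
  | dia l a => .dia l a.formula

/-- The derivation tree uses only base formulas from `A`. -/
def BuiltT.Ok {Λ : Type u} {V : Type v} (A : Set (MF Λ V)) : BuiltT Λ V → Prop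
  | base φ => φ ∈ A
  | and a b => a.Ok A ∧ b.Ok A
  | dia _ a => a.Ok A

/-- Helper for gluing two labelled trees at their roots: the relation on the disjoint sum,
with the edges out of the second root re-attached to the first root. -/
def glueR {Λ : Type u} {W₁ W₂ : Type} (R₁ : Λ → W₁ → W₁ → Prop) (R₂ : Λ → W₂ → W₂ → Prop)
    (r₁ : W₁) (r₂ : W₂) (l : Λ) : W₁ ⊕ W₂ → W₁ ⊕ W₂ → Prop
  | Sum.inl a, Sum.inl b => R₁ l a b
  | Sum.inr a, Sum.inr b => R₂ l a b
  | Sum.inl a, Sum.inr b => a = r₁ ∧ R₂ l r₂ b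
  | Sum.inr _, Sum.inl _ => False

open Classical in
/-- Helper for gluing two labelled trees at their roots: the label function, the glued root
receiving the union of the two root labels. -/
noncomputable def glueLab {α : Type w} {W₁ W₂ : Type} (L₁ : W₁ → Set α) (L₂ : W₂ → Set α)
    (r₁ : W₁) (r₂ : W₂) : W₁ ⊕ W₂ → Set α
  | Sum.inl a => if a = r₁ then L₁ r₁ ∪ L₂ r₂ else L₁ a
  | Sum.inr b => L₂ b

/-- Helper for prefixing a labelled tree with a new root: the relation on `Option W`,
with an `R_{l₀}`-edge from the new root `none` to the old root `r`. -/
def prefR {Λ : Type u} {W : Type} (R : Λ → W → W → Prop) (l₀ : Λ) (r : W) (l : Λ) :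
    Option W → Option W → Prop
  | none, some w => l = l₀ ∧ w = r
  | some a, some b => R l a b
  | _, _ => False

/-- Helper for prefixing a labelled tree with a new root: the label function, the new root
getting the empty label. -/
def prefLab {α : Type w} {W : Type} (L : W → Set α) : Option W → Set α
  | none => ∅
  | some a => L a

/-- The reduced syntactical tree of a formula built from base formulas using `∧` and `◇_λ`:
a single root labelled `{a}` for a base formula `a`; for a conjunction, the two trees
with their roots identified (labels united); for `◇_λ ψ`, a new root with empty label and an
`R_λ`-edge to the root of the tree of `ψ`. -/
noncomputable def TreeOf {Λ : Type u} {V : Type v} : BuiltT Λ V → LabTree Λ (MF Λ V)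
  | .base φ =>
      { V := Unit, R := fun _ _ _ => False, root := (), label := fun _ => {φ} }
  | .and b₁ b₂ =>
      let T₁ := TreeOf b₁
      let T₂ := TreeOf b₂
      { V := {v : T₁.V ⊕ T₂.V // v ≠ Sum.inr T₂.root},
        R := fun l u v => glueR T₁.R T₂.R T₁.root T₂.root l u.1 v.1,
        root := ⟨Sum.inl T₁.root, by exact Sum.inl_ne_inr⟩,
        label := fun v => glueLab T₁.label T₂.label T₁.root T₂.root v.1 }
  | .dia l b =>
      let T := TreeOf b
      { V := Option T.V,
        R := fun l' u v => prefR T.R l T.root l' u v,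
        root := none,
        label := fun v => prefLab T.label v }

/-- Restrictedly positive first-order formulas over the frame language: built from atoms
`y ∈ E` (`E` an `L`-expression) using `∧`, `∨` and the restricted quantifiers
`(∀ y ◁_λ x)` and `(∃ y ◁_λ x)`. -/
inductive KrF (Λ : Type u) : Type u
  | atom : ℕ → LExp Λ → KrF Λ
  | and : KrF Λ → KrF Λ → KrF Λ
  | or : KrF Λ → KrF Λ → KrF Λ
  | all : ℕ → Λ → ℕ → KrF Λ → KrF Λ
  | ex : ℕ → Λ → ℕ → KrF Λ → KrF Λ

namespace KrF
variable {Λ : Type u}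

/-- Truth of a restrictedly positive formula in a frame under an assignment `g` of points to
individual variables; the atom `y ∈ E` is read via the `#`-translation, i.e. as membership
of `g y` in the denotation of `E`. -/
def holds (F : Frame Λ) : (ℕ → F.W) → KrF Λ → Prop
  | g, atom y E => g y ∈ E.den F g
  | g, and a b => holds F g a ∧ holds F g b
  | g, or a b => holds F g a ∨ holds F g b
  | g, all y l x β => ∀ w, F.R l (g x) w → holds F (Function.update g y w) β
  | g, ex y l x β => ∃ w, F.R l (g x) w ∧ holds F (Function.update g y w) β

/-- Free variables. -/
def fv : KrF Λ → Set ℕ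
  | atom y E => insert y E.evars
  | and a b => fv a ∪ fv b
  | or a b => fv a ∪ fv b
  | all y _ x β => insert x (fv β \ {y})
  | ex y _ x β => insert x (fv β \ {y})

/-- Bound variables. -/
def bv : KrF Λ → Set ℕ
  | atom _ _ => ∅
  | and a b => bv a ∪ bv b
  | or a b => bv a ∪ bv b
  | all y _ _ β => insert y (bv β)
  | ex y _ _ β => insert y (bv β)

/-- No two distinct quantifier occurrences bind the same variable. -/
def CleanBound : KrF Λ → Prop
  | atom _ _ => True
  | and a b => CleanBound a ∧ CleanBound b ∧ bv a ∩ bv b = ∅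
  | or a b => CleanBound a ∧ CleanBound b ∧ bv a ∩ bv b = ∅
  | all y _ _ β => CleanBound β ∧ y ∉ bv β
  | ex y _ _ β => CleanBound β ∧ y ∉ bv β

/-- Clean formulas: no variable occurs both free and bound, and no two distinct quantifier
occurrences bind the same variable. -/
def Clean (φ : KrF Λ) : Prop := fv φ ∩ bv φ = ∅ ∧ CleanBound φ

/-- All the `L`-expressions occurring in atoms of the formula satisfy `P`. -/
def AtomsAll (P : LExp Λ → Prop) : KrF Λ → Prop
  | atom _ E => P E
  | and a b => AtomsAll P a ∧ AtomsAll P b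
  | or a b => AtomsAll P a ∧ AtomsAll P b
  | all _ _ _ β => AtomsAll P β
  | ex _ _ _ β => AtomsAll P β

/-- Quantifier-free formulas (built from atoms using only `∧` and `∨`). -/
def QFree : KrF Λ → Prop
  | atom _ _ => True
  | and a b => QFree a ∧ QFree b
  | or a b => QFree a ∧ QFree b
  | all _ _ _ _ => False
  | ex _ _ _ _ => False

/-- Formulas built from atoms using only `∧`, `∨` and restricted universal quantification
(no existential quantifier). -/
def NoEx : KrF Λ → Prop
  | atom _ _ => True
  | and a b => NoEx a ∧ NoEx b
  | or a b => NoEx a ∧ NoEx b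
  | all _ _ _ β => NoEx β
  | ex _ _ _ _ => False

/-- `GKok U e φ`: every variable occurring in an `L`-expression of an atom of `φ` is
inherently universal. Here `U` is the set of variables that are inherently universal so far
(initially the free variables) and `e` records whether we are within the scope of an
existential quantifier. -/
def GKok : Set ℕ → Bool → KrF Λ → Prop
  | U, _, atom _ E => E.evars ⊆ U
  | U, e, and a b => GKok U e a ∧ GKok U e b
  | U, e, or a b => GKok U e a ∧ GKok U e b
  | U, false, all y _ _ β => GKok (insert y U) false β
  | U, true, all _ _ _ β => GKok U true β
  | U, _, ex _ _ _ β => GKok U true β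

end KrF

/-- A generalized Kracht formula with free variables: clean, restrictedly positive with safe
atoms, and in every atom `y ∈ E` all variables of `E` are inherently universal. -/
def IsGenKrachtFV {Λ : Type u} (α : KrF Λ) : Prop :=
  α.Clean ∧ α.AtomsAll Safe ∧ α.GKok α.fv false

/-- A generalized Kracht formula: a generalized Kracht formula with free variables whose
only free variable is `x0`. -/
def IsGenKracht {Λ : Type u} (α : KrF Λ) (x0 : ℕ) : Prop :=
  IsGenKrachtFV α ∧ α.fv = {x0}

/-- Generalized Sahlqvist antecedents: built from regular box-formulas and negative
formulas using only `∧`, `∨`, `◇_λ`. -/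
inductive GSAnt {Λ : Type u} : MF Λ (ℕ × ℕ) → Prop
  | reg {φ p} : RegBF Prod.fst φ p → GSAnt φ
  | neg {φ} : Positive φ → GSAnt (.neg φ)
  | and {a b} : GSAnt a → GSAnt b → GSAnt (.and a b)
  | or {a b} : GSAnt a → GSAnt b → GSAnt (.or a b)
  | dia (l) {a} : GSAnt a → GSAnt (.dia l a)

/-- Generalized Sahlqvist formulas: built from generalized Sahlqvist implications
`GSA → ⊥` by applying boxes and conjunctions, and disjunctions only to formulas without
common propositional variables. -/
inductive GSF {Λ : Type u} : MF Λ (ℕ × ℕ) → Prop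
  | impl {a} : GSAnt a → GSF (.imp a .bot)
  | box (l) {a} : GSF a → GSF (.box l a)
  | and {a b} : GSF a → GSF b → GSF (.and a b)
  | or {a b} : GSF a → GSF b → MF.vars a ∩ MF.vars b = ∅ → GSF (.or a b)

open Classical in
/-- The modal translation `E^T` of a quasi-safe expression: safe subexpressions are
replaced by their associated propositional variables `p_E`, and `∩, ∪, R^{-1}_λ, R^□_λ`
become `∧, ∨, ◇_λ, □_λ`. -/
noncomputable def Etrans {Λ : Type u} (pE : LExp Λ → ℕ × ℕ) : LExp Λ → MF Λ (ℕ × ℕ)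
  | .var i => .var (pE (.var i))
  | .top => .top
  | .bot => .bot
  | .inter a b =>
      if Safe (LExp.inter a b) then .var (pE (.inter a b))
      else .and (Etrans pE a) (Etrans pE b)
  | .union a b =>
      if Safe (LExp.union a b) then .var (pE (.union a b))
      else .or (Etrans pE a) (Etrans pE b)
  | .rinv l a =>
      if Safe (LExp.rinv l a) then .var (pE (.rinv l a)) else .dia l (Etrans pE a)
  | .rbox l a =>
      if Safe (LExp.rbox l a) then .var (pE (.rbox l a)) else .box l (Etrans pE a)
  | .rfw l a => if Safe (LExp.rfw l a) then .var (pE (.rfw l a)) else .bot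

/-- A finite disjunction of modal formulas (empty disjunction is `⊥`). -/
def orList {Λ : Type u} {V : Type v} : List (MF Λ V) → MF Λ V
  | [] => .bot
  | a :: as => .or a (orList as)

namespace S15

variable {Λ : Type u}

abbrev Atom (Λ : Type u) := ℕ × LExp Λ

def atomH (F : Frame Λ) (g : ℕ → F.W) (a : Atom Λ) : Prop := g a.1 ∈ a.2.den F g

def conjH (F : Frame Λ) (g : ℕ → F.W) (c : List (Atom Λ)) : Prop := ∀ a ∈ c, atomH F g a
def disjH (F : Frame Λ) (g : ℕ → F.W) (c : List (Atom Λ)) : Prop := ∃ a ∈ c, atomH F g a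
def dnfH (F : Frame Λ) (g : ℕ → F.W) (D : List (List (Atom Λ))) : Prop := ∃ c ∈ D, conjH F g c
def cnfH (F : Frame Λ) (g : ℕ → F.W) (D : List (List (Atom Λ))) : Prop := ∀ c ∈ D, disjH F g c

def toDNF : KrF Λ → List (List (Atom Λ))
  | .atom z E => [[(z, E)]]
  | .and a b => (toDNF a).flatMap (fun c => (toDNF b).map (fun d => c ++ d))
  | .or a b => toDNF a ++ toDNF b
  | _ => []

def toCNF : KrF Λ → List (List (Atom Λ))
  | .atom z E => [[(z, E)]]
  | .or a b => (toCNF a).flatMap (fun c => (toCNF b).map (fun d => c ++ d))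
  | .and a b => toCNF a ++ toCNF b
  | _ => []

lemma toDNF_correct {F : Frame Λ} {g : ℕ → F.W} :
    ∀ {φ : KrF Λ}, φ.QFree → (KrF.holds F g φ ↔ dnfH F g (toDNF φ))
  | .atom z E, _ => by
      simp only [KrF.holds, dnfH, toDNF, List.mem_singleton, conjH]
      constructor
      · intro h
        exact ⟨[(z, E)], rfl, by
          rintro a ha; rcases List.mem_singleton.1 ha with rfl; exact h⟩
      · rintro ⟨c, rfl, hc⟩
        exact hc (z, E) (List.mem_singleton.2 rfl)
  | .and a b, h => by
      have ha := toDNF_correct (F := F) (g := g) h.1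
      have hb := toDNF_correct (F := F) (g := g) h.2
      simp only [KrF.holds, ha, hb, dnfH, toDNF, List.mem_flatMap, List.mem_map, conjH]
      constructor
      · rintro ⟨⟨c, hc, hcH⟩, ⟨d, hd, hdH⟩⟩
        exact ⟨c ++ d, ⟨c, hc, d, hd, rfl⟩, by
          intro x hx; rcases List.mem_append.1 hx with h | h
          exacts [hcH x h, hdH x h]⟩
      · rintro ⟨e, ⟨c, hc, d, hd, rfl⟩, hH⟩
        exact ⟨⟨c, hc, fun x hx => hH x (List.mem_append.2 (Or.inl hx))⟩,
               ⟨d, hd, fun x hx => hH x (List.mem_append.2 (Or.inr hx))⟩⟩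
  | .or a b, h => by
      have ha := toDNF_correct (F := F) (g := g) h.1
      have hb := toDNF_correct (F := F) (g := g) h.2
      simp only [KrF.holds, ha, hb, dnfH, toDNF, List.mem_append]
      constructor
      · rintro (⟨c, hc, hH⟩ | ⟨c, hc, hH⟩)
        exacts [⟨c, Or.inl hc, hH⟩, ⟨c, Or.inr hc, hH⟩]
      · rintro ⟨c, hc | hc, hH⟩
        exacts [Or.inl ⟨c, hc, hH⟩, Or.inr ⟨c, hc, hH⟩]

lemma toCNF_correct {F : Frame Λ} {g : ℕ → F.W} :
    ∀ {φ : KrF Λ}, φ.QFree → (KrF.holds F g φ ↔ cnfH F g (toCNF φ))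
  | .atom z E, _ => by
      simp only [KrF.holds, cnfH, toCNF, List.mem_singleton, disjH]
      constructor
      · intro h c hc
        subst hc
        exact ⟨(z, E), List.mem_singleton.2 rfl, h⟩
      · intro h
        obtain ⟨a, ha, hH⟩ := h [(z, E)] rfl
        rcases List.mem_singleton.1 ha with rfl
        exact hH
  | .or a b, h => by
      have ha := toCNF_correct (F := F) (g := g) h.1
      have hb := toCNF_correct (F := F) (g := g) h.2
      simp only [KrF.holds, ha, hb, cnfH, toCNF, List.mem_flatMap, List.mem_map, disjH]
      constructor
      · rintro (hA | hB)
        · rintro e ⟨c, hc, d, hd, rfl⟩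
          obtain ⟨x, hx, hxH⟩ := hA c hc
          exact ⟨x, List.mem_append.2 (Or.inl hx), hxH⟩
        · rintro e ⟨c, hc, d, hd, rfl⟩
          obtain ⟨x, hx, hxH⟩ := hB d hd
          exact ⟨x, List.mem_append.2 (Or.inr hx), hxH⟩
      · intro h'
        by_cases hA : ∀ c ∈ toCNF a, ∃ x ∈ c, atomH F g x
        · exact Or.inl hA
        · push_neg at hA
          obtain ⟨c, hc, hcH⟩ := hA
          refine Or.inr fun d hd => ?_
          obtain ⟨x, hx, hxH⟩ := h' (c ++ d) ⟨c, hc, d, hd, rfl⟩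
          rcases List.mem_append.1 hx with h | h
          · exact absurd hxH (hcH x h)
          · exact ⟨x, h, hxH⟩
  | .and a b, h => by
      have ha := toCNF_correct (F := F) (g := g) h.1
      have hb := toCNF_correct (F := F) (g := g) h.2
      simp only [KrF.holds, ha, hb, cnfH, toCNF, List.mem_append]
      constructor
      · rintro ⟨hA, hB⟩ c (hc | hc); exacts [hA c hc, hB c hc]
      · intro h'
        exact ⟨fun c hc => h' c (Or.inl hc), fun c hc => h' c (Or.inr hc)⟩

lemma atomsAll_toDNF {P : LExp Λ → Prop} :
    ∀ {φ : KrF Λ}, φ.QFree → φ.AtomsAll P → ∀ c ∈ toDNF φ, ∀ a ∈ c, P a.2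
  | .atom z E, _, hP => by simp [toDNF]; exact hP
  | .and a b, hq, hP => by
      intro c hc x hx
      simp only [toDNF, List.mem_flatMap, List.mem_map] at hc
      obtain ⟨c₁, hc₁, c₂, hc₂, rfl⟩ := hc
      rcases List.mem_append.1 hx with h | h
      · exact atomsAll_toDNF hq.1 hP.1 c₁ hc₁ x h
      · exact atomsAll_toDNF hq.2 hP.2 c₂ hc₂ x h
  | .or a b, hq, hP => by
      intro c hc
      rcases List.mem_append.1 hc with h | h
      · exact atomsAll_toDNF hq.1 hP.1 c h
      · exact atomsAll_toDNF hq.2 hP.2 c h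

lemma atomsAll_toCNF {P : LExp Λ → Prop} :
    ∀ {φ : KrF Λ}, φ.QFree → φ.AtomsAll P → ∀ c ∈ toCNF φ, ∀ a ∈ c, P a.2
  | .atom z E, _, hP => by simp [toCNF]; exact hP
  | .or a b, hq, hP => by
      intro c hc x hx
      simp only [toCNF, List.mem_flatMap, List.mem_map] at hc
      obtain ⟨c₁, hc₁, c₂, hc₂, rfl⟩ := hc
      rcases List.mem_append.1 hx with h | h
      · exact atomsAll_toCNF hq.1 hP.1 c₁ hc₁ x h
      · exact atomsAll_toCNF hq.2 hP.2 c₂ hc₂ x h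
  | .and a b, hq, hP => by
      intro c hc
      rcases List.mem_append.1 hc with h | h
      · exact atomsAll_toCNF hq.1 hP.1 c h
      · exact atomsAll_toCNF hq.2 hP.2 c h

/-! Back from normal forms to formulas. -/

def conjF : List (Atom Λ) → KrF Λ
  | [] => .atom 0 .top
  | a :: as => .and (.atom a.1 a.2) (conjF as)

def disjF : List (Atom Λ) → KrF Λ
  | [] => .atom 0 .bot
  | a :: as => .or (.atom a.1 a.2) (disjF as)

def ofDNF : List (List (Atom Λ)) → KrF Λ
  | [] => .atom 0 .bot
  | c :: cs => .or (conjF c) (ofDNF cs)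

def ofCNF : List (List (Atom Λ)) → KrF Λ
  | [] => .atom 0 .top
  | c :: cs => .and (disjF c) (ofCNF cs)

lemma conjF_holds {F : Frame Λ} {g : ℕ → F.W} :
    ∀ {c : List (Atom Λ)}, KrF.holds F g (conjF c) ↔ conjH F g c
  | [] => by simp [conjF, KrF.holds, conjH, LExp.den]
  | a :: as => by
      simp [conjF, KrF.holds, conjH, conjF_holds (c := as), atomH]

lemma disjF_holds {F : Frame Λ} {g : ℕ → F.W} :
    ∀ {c : List (Atom Λ)}, KrF.holds F g (disjF c) ↔ disjH F g c
  | [] => by simp [disjF, KrF.holds, disjH, LExp.den]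
  | a :: as => by
      simp [disjF, KrF.holds, disjH, disjF_holds (c := as), atomH]

lemma ofDNF_holds {F : Frame Λ} {g : ℕ → F.W} :
    ∀ {D : List (List (Atom Λ))}, KrF.holds F g (ofDNF D) ↔ dnfH F g D
  | [] => by simp [ofDNF, KrF.holds, dnfH, LExp.den]
  | c :: cs => by
      simp [ofDNF, KrF.holds, dnfH, ofDNF_holds (D := cs), conjF_holds]

lemma ofCNF_holds {F : Frame Λ} {g : ℕ → F.W} :
    ∀ {D : List (List (Atom Λ))}, KrF.holds F g (ofCNF D) ↔ cnfH F g D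
  | [] => by simp [ofCNF, KrF.holds, cnfH, LExp.den]
  | c :: cs => by
      simp [ofCNF, KrF.holds, cnfH, ofCNF_holds (D := cs), disjF_holds]

lemma conjF_qfree : ∀ (c : List (Atom Λ)), (conjF c).QFree
  | [] => trivial
  | a :: as => ⟨trivial, conjF_qfree as⟩

lemma disjF_qfree : ∀ (c : List (Atom Λ)), (disjF c).QFree
  | [] => trivial
  | a :: as => ⟨trivial, disjF_qfree as⟩

lemma ofDNF_qfree : ∀ (D : List (List (Atom Λ))), (ofDNF D).QFree
  | [] => trivial
  | c :: cs => ⟨conjF_qfree c, ofDNF_qfree cs⟩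

lemma ofCNF_qfree : ∀ (D : List (List (Atom Λ))), (ofCNF D).QFree
  | [] => trivial
  | c :: cs => ⟨disjF_qfree c, ofCNF_qfree cs⟩

lemma conjF_atomsAll {P : LExp Λ → Prop} (hT : P .top) :
    ∀ {c : List (Atom Λ)}, (∀ a ∈ c, P a.2) → (conjF c).AtomsAll P
  | [], _ => hT
  | a :: as, h => ⟨h a (List.mem_cons_self), conjF_atomsAll hT fun x hx => h x (List.mem_cons_of_mem _ hx)⟩

lemma disjF_atomsAll {P : LExp Λ → Prop} (hB : P .bot) :
    ∀ {c : List (Atom Λ)}, (∀ a ∈ c, P a.2) → (disjF c).AtomsAll P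
  | [], _ => hB
  | a :: as, h => ⟨h a (List.mem_cons_self), disjF_atomsAll hB fun x hx => h x (List.mem_cons_of_mem _ hx)⟩

lemma ofDNF_atomsAll {P : LExp Λ → Prop} (hT : P .top) (hB : P .bot) :
    ∀ {D : List (List (Atom Λ))}, (∀ c ∈ D, ∀ a ∈ c, P a.2) → (ofDNF D).AtomsAll P
  | [], _ => hB
  | c :: cs, h => ⟨conjF_atomsAll hT (h c (List.mem_cons_self)),
      ofDNF_atomsAll hT hB fun x hx => h x (List.mem_cons_of_mem _ hx)⟩

lemma ofCNF_atomsAll {P : LExp Λ → Prop} (hT : P .top) (hB : P .bot) :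
    ∀ {D : List (List (Atom Λ))}, (∀ c ∈ D, ∀ a ∈ c, P a.2) → (ofCNF D).AtomsAll P
  | [], _ => hT
  | c :: cs, h => ⟨disjF_atomsAll hB (h c (List.mem_cons_self)),
      ofCNF_atomsAll hT hB fun x hx => h x (List.mem_cons_of_mem _ hx)⟩

/-! Semantic lemmas. -/

lemma den_update {F : Frame Λ} {g : ℕ → F.W} {y : ℕ} {w : F.W} {E : LExp Λ}
    (h : y ∉ E.evars) : E.den F (Function.update g y w) = E.den F g := by
  induction E with
  | var i =>
      simp only [LExp.evars, Set.mem_singleton_iff] at h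
      simp [LExp.den, Function.update_of_ne (Ne.symm h)]
  | top => rfl
  | bot => rfl
  | inter a b iha ihb =>
      simp only [LExp.evars, Set.mem_union] at h
      push_neg at h
      simp [LExp.den, iha h.1, ihb h.2]
  | union a b iha ihb =>
      simp only [LExp.evars, Set.mem_union] at h
      push_neg at h
      simp [LExp.den, iha h.1, ihb h.2]
  | rinv l a iha => simp only [LExp.evars] at h; simp [LExp.den, iha h]
  | rbox l a iha => simp only [LExp.evars] at h; simp [LExp.den, iha h]
  | rfw l a iha => simp only [LExp.evars] at h; simp [LExp.den, iha h]

def interList : List (LExp Λ) → LExp Λ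
  | [] => .top
  | e :: es => .inter e (interList es)

lemma mem_den_interList {F : Frame Λ} {g : ℕ → F.W} {w : F.W} :
    ∀ {L : List (LExp Λ)}, w ∈ (interList L).den F g ↔ ∀ e ∈ L, w ∈ e.den F g
  | [] => by simp [interList, LExp.den]
  | e :: es => by simp [interList, LExp.den, mem_den_interList (L := es)]

lemma mem_den_unionList {F : Frame Λ} {g : ℕ → F.W} {w : F.W} :
    ∀ {L : List (LExp Λ)}, w ∈ (unionList L).den F g ↔ ∃ e ∈ L, w ∈ e.den F g
  | [] => by simp [unionList, LExp.den]
  | e :: es => by simp [unionList, LExp.den, mem_den_unionList (L := es)]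

def exConj (y : ℕ) (l : Λ) (x : ℕ) (c : List (Atom Λ)) : List (Atom Λ) :=
  (x, .rinv l (interList ((c.filter (fun a => a.1 == y)).map Prod.snd))) ::
    c.filter (fun a => a.1 != y)

def allClause (y : ℕ) (l : Λ) (x : ℕ) (c : List (Atom Λ)) : List (Atom Λ) :=
  (x, .rbox l (unionList ((c.filter (fun a => a.1 == y)).map Prod.snd))) ::
    c.filter (fun a => a.1 != y)

lemma atomH_update {F : Frame Λ} {g : ℕ → F.W} {y : ℕ} {w : F.W} {a : Atom Λ}
    (h : y ∉ a.2.evars) :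
    atomH F (Function.update g y w) a ↔
      (if a.1 = y then w else g a.1) ∈ a.2.den F g := by
  simp [atomH, den_update h, Function.update_apply]

lemma exConj_correct {F : Frame Λ} {g : ℕ → F.W} {y x : ℕ} {l : Λ} {c : List (Atom Λ)}
    (hE : ∀ a ∈ c, y ∉ a.2.evars) :
    (∃ w, F.R l (g x) w ∧ conjH F (Function.update g y w) c) ↔
      conjH F g (exConj y l x c) := by
  have key : ∀ w : F.W, conjH F (Function.update g y w) c ↔
      ((∀ a ∈ c, a.1 = y → w ∈ a.2.den F g) ∧ (∀ a ∈ c, a.1 ≠ y → atomH F g a)) := by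
    intro w
    constructor
    · intro h
      constructor
      · intro a ha hay
        have := (atomH_update (hE a ha)).1 (h a ha)
        simpa [hay] using this
      · intro a ha hay
        have := (atomH_update (hE a ha)).1 (h a ha)
        simpa [atomH, hay] using this
    · rintro ⟨h1, h2⟩ a ha
      rw [atomH_update (hE a ha)]
      by_cases hay : a.1 = y
      · simpa [hay] using h1 a ha hay
      · simpa [atomH, hay] using h2 a ha hay
  constructor
  · rintro ⟨w, hw, hc⟩
    rw [key] at hc
    intro a ha
    rcases List.mem_cons.1 ha with rfl | ha
    · refine ⟨w, hw, ?_⟩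
      rw [mem_den_interList]
      rintro e he
      simp only [List.mem_map, List.mem_filter] at he
      obtain ⟨b, ⟨hb, hby⟩, rfl⟩ := he
      exact hc.1 b hb (by simpa using hby)
    · simp only [List.mem_filter] at ha
      exact hc.2 a ha.1 (by simpa using ha.2)
  · intro h
    obtain ⟨w, hw, hmem⟩ := h _ (List.mem_cons_self)
    refine ⟨w, hw, ?_⟩
    rw [key]
    constructor
    · intro a ha hay
      rw [mem_den_interList] at hmem
      exact hmem a.2 (List.mem_map.2 ⟨a, List.mem_filter.2 ⟨ha, by simpa using hay⟩, rfl⟩)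
    · intro a ha hay
      exact h a (List.mem_cons_of_mem _ (List.mem_filter.2 ⟨ha, by simpa using hay⟩))

lemma allClause_correct {F : Frame Λ} {g : ℕ → F.W} {y x : ℕ} {l : Λ} {c : List (Atom Λ)}
    (hE : ∀ a ∈ c, y ∉ a.2.evars) :
    (∀ w, F.R l (g x) w → disjH F (Function.update g y w) c) ↔
      disjH F g (allClause y l x c) := by
  have key : ∀ w : F.W, disjH F (Function.update g y w) c ↔
      ((∃ a ∈ c, a.1 = y ∧ w ∈ a.2.den F g) ∨ (∃ a ∈ c, a.1 ≠ y ∧ atomH F g a)) := by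
    intro w
    constructor
    · rintro ⟨a, ha, haH⟩
      rw [atomH_update (hE a ha)] at haH
      by_cases hay : a.1 = y
      · exact Or.inl ⟨a, ha, hay, by simpa [hay] using haH⟩
      · exact Or.inr ⟨a, ha, hay, by simpa [atomH, hay] using haH⟩
    · rintro (⟨a, ha, hay, hm⟩ | ⟨a, ha, hay, hm⟩)
      · exact ⟨a, ha, by rw [atomH_update (hE a ha)]; simpa [hay] using hm⟩
      · exact ⟨a, ha, by rw [atomH_update (hE a ha)]; simpa [atomH, hay] using hm⟩
  constructor
  · intro h
    by_cases hrest : ∃ a ∈ c, a.1 ≠ y ∧ atomH F g a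
    · obtain ⟨a, ha, hay, hm⟩ := hrest
      exact ⟨a, List.mem_cons_of_mem _ (List.mem_filter.2 ⟨ha, by simpa using hay⟩), hm⟩
    · refine ⟨_, List.mem_cons_self, ?_⟩
      simp only [atomH]
      intro w hw
      rcases (key w).1 (h w hw) with ⟨a, ha, hay, hm⟩ | hr
      · rw [mem_den_unionList]
        exact ⟨a.2, List.mem_map.2 ⟨a, List.mem_filter.2 ⟨ha, by simpa using hay⟩, rfl⟩, hm⟩
      · exact absurd hr hrest
  · rintro ⟨a, ha, haH⟩ w hw
    rcases List.mem_cons.1 ha with rfl | ha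
    · have := haH w hw
      rw [mem_den_unionList] at this
      obtain ⟨e, he, hm⟩ := this
      simp only [List.mem_map, List.mem_filter] at he
      obtain ⟨b, ⟨hb, hby⟩, rfl⟩ := he
      exact (key w).2 (Or.inl ⟨b, hb, by simpa using hby, hm⟩)
    · simp only [List.mem_filter] at ha
      exact (key w).2 (Or.inr ⟨a, ha.1, by simpa using ha.2, haH⟩)

/-! The elimination function. -/

def elim : KrF Λ → KrF Λ
  | .atom z E => .atom z E
  | .and a b => .and (elim a) (elim b)
  | .or a b => .or (elim a) (elim b)
  | .ex y l x β => ofDNF ((toDNF (elim β)).map (exConj y l x))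
  | .all y l x β => ofCNF ((toCNF (elim β)).map (allClause y l x))

lemma elim_qfree : ∀ (φ : KrF Λ), (elim φ).QFree
  | .atom _ _ => trivial
  | .and a b => ⟨elim_qfree a, elim_qfree b⟩
  | .or a b => ⟨elim_qfree a, elim_qfree b⟩
  | .ex _ _ _ β => ofDNF_qfree _
  | .all _ _ _ β => ofCNF_qfree _

lemma elim_evars {S : Set ℕ} :
    ∀ {φ : KrF Λ}, φ.AtomsAll (fun E => E.evars ⊆ S) →
      (elim φ).AtomsAll (fun E => E.evars ⊆ S)
  | .atom z E, h => h
  | .and a b, h => ⟨elim_evars h.1, elim_evars h.2⟩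
  | .or a b, h => ⟨elim_evars h.1, elim_evars h.2⟩
  | .ex y l x β, h => by
      refine ofDNF_atomsAll (by simp [LExp.evars]) (by simp [LExp.evars]) ?_
      intro c hc a ha
      simp only [List.mem_map] at hc
      obtain ⟨c₀, hc₀, rfl⟩ := hc
      have hsub := atomsAll_toDNF (elim_qfree β) (elim_evars (φ := β) h) c₀ hc₀
      rcases List.mem_cons.1 ha with rfl | ha
      · simp only [LExp.evars]
        intro v hv
        -- v ∈ evars of interList of mapped snd
        have : ∀ L : List (LExp Λ), (∀ e ∈ L, LExp.evars e ⊆ S) →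
            LExp.evars (interList L) ⊆ S := by
          intro L
          induction L with
          | nil => intro _; simp [interList, LExp.evars]
          | cons e es ih =>
              intro hL
              simp only [interList, LExp.evars]
              intro v hv
              rcases hv with hv | hv
              · exact hL e (List.mem_cons_self) hv
              · exact ih (fun e' he' => hL e' (List.mem_cons_of_mem _ he')) hv
        refine this _ ?_ hv
        rintro e he
        simp only [List.mem_map, List.mem_filter] at he
        obtain ⟨b, ⟨hb, _⟩, rfl⟩ := he
        exact hsub b hb
      · simp only [List.mem_filter] at ha
        exact hsub a ha.1
  | .all y l x β, h => by
      refine ofCNF_atomsAll (by simp [LExp.evars]) (by simp [LExp.evars]) ?_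
      intro c hc a ha
      simp only [List.mem_map] at hc
      obtain ⟨c₀, hc₀, rfl⟩ := hc
      have hsub := atomsAll_toCNF (elim_qfree β) (elim_evars (φ := β) h) c₀ hc₀
      rcases List.mem_cons.1 ha with rfl | ha
      · simp only [LExp.evars]
        intro v hv
        have : ∀ L : List (LExp Λ), (∀ e ∈ L, LExp.evars e ⊆ S) →
            LExp.evars (unionList L) ⊆ S := by
          intro L
          induction L with
          | nil => intro _; simp [unionList, LExp.evars]
          | cons e es ih =>
              intro hL
              simp only [unionList, LExp.evars]
              intro v hv
              rcases hv with hv | hv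
              · exact hL e (List.mem_cons_self) hv
              · exact ih (fun e' he' => hL e' (List.mem_cons_of_mem _ he')) hv
        refine this _ ?_ hv
        rintro e he
        simp only [List.mem_map, List.mem_filter] at he
        obtain ⟨b, ⟨hb, _⟩, rfl⟩ := he
        exact hsub b hb
      · simp only [List.mem_filter] at ha
        exact hsub a ha.1

lemma interList_quasiSafe : ∀ {L : List (LExp Λ)}, (∀ e ∈ L, QuasiSafe e) →
    QuasiSafe (interList L)
  | [], _ => QuasiSafe.top
  | e :: es, h => QuasiSafe.inter (h e (List.mem_cons_self))
      (interList_quasiSafe fun e' he' => h e' (List.mem_cons_of_mem _ he'))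

lemma unionList_quasiSafe : ∀ {L : List (LExp Λ)}, (∀ e ∈ L, QuasiSafe e) →
    QuasiSafe (unionList L)
  | [], _ => QuasiSafe.bot
  | e :: es, h => QuasiSafe.union (h e (List.mem_cons_self))
      (unionList_quasiSafe fun e' he' => h e' (List.mem_cons_of_mem _ he'))

lemma elim_quasiSafe :
    ∀ {φ : KrF Λ}, φ.AtomsAll Safe → (elim φ).AtomsAll QuasiSafe
  | .atom z E, h => QuasiSafe.safe h
  | .and a b, h => ⟨elim_quasiSafe h.1, elim_quasiSafe h.2⟩
  | .or a b, h => ⟨elim_quasiSafe h.1, elim_quasiSafe h.2⟩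
  | .ex y l x β, h => by
      refine ofDNF_atomsAll QuasiSafe.top QuasiSafe.bot ?_
      intro c hc a ha
      simp only [List.mem_map] at hc
      obtain ⟨c₀, hc₀, rfl⟩ := hc
      have hsub := atomsAll_toDNF (elim_qfree β) (elim_quasiSafe (φ := β) h) c₀ hc₀
      rcases List.mem_cons.1 ha with rfl | ha
      · refine QuasiSafe.rinv l (interList_quasiSafe ?_)
        rintro e he
        simp only [List.mem_map, List.mem_filter] at he
        obtain ⟨b, ⟨hb, _⟩, rfl⟩ := he
        exact hsub b hb
      · simp only [List.mem_filter] at ha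
        exact hsub a ha.1
  | .all y l x β, h => by
      refine ofCNF_atomsAll QuasiSafe.top QuasiSafe.bot ?_
      intro c hc a ha
      simp only [List.mem_map] at hc
      obtain ⟨c₀, hc₀, rfl⟩ := hc
      have hsub := atomsAll_toCNF (elim_qfree β) (elim_quasiSafe (φ := β) h) c₀ hc₀
      rcases List.mem_cons.1 ha with rfl | ha
      · refine QuasiSafe.rbox l (unionList_quasiSafe ?_)
        rintro e he
        simp only [List.mem_map, List.mem_filter] at he
        obtain ⟨b, ⟨hb, _⟩, rfl⟩ := he
        exact hsub b hb
      · simp only [List.mem_filter] at ha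
        exact hsub a ha.1

lemma elim_holds {S : Set ℕ} :
    ∀ {φ : KrF Λ}, φ.AtomsAll (fun E => E.evars ⊆ S) → (∀ v ∈ φ.bv, v ∉ S) →
      ∀ (F : Frame Λ) (g : ℕ → F.W), KrF.holds F g φ ↔ KrF.holds F g (elim φ)
  | .atom z E, _, _, F, g => Iff.rfl
  | .and a b, hA, hb, F, g => by
      have h1 := elim_holds hA.1 (fun v hv => hb v (Set.mem_union_left _ hv)) F g
      have h2 := elim_holds hA.2 (fun v hv => hb v (Set.mem_union_right _ hv)) F g
      simp only [KrF.holds, elim, h1, h2]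
  | .or a b, hA, hb, F, g => by
      have h1 := elim_holds hA.1 (fun v hv => hb v (Set.mem_union_left _ hv)) F g
      have h2 := elim_holds hA.2 (fun v hv => hb v (Set.mem_union_right _ hv)) F g
      simp only [KrF.holds, elim, h1, h2]
  | .ex y l x β, hA, hb, F, g => by
      have hyS : y ∉ S := hb y (Set.mem_insert _ _)
      have hbβ : ∀ v ∈ β.bv, v ∉ S := fun v hv => hb v (Set.mem_insert_of_mem _ hv)
      have hatoms := atomsAll_toDNF (elim_qfree β) (elim_evars (φ := β) hA)
      show (∃ w, F.R l (g x) w ∧ KrF.holds F (Function.update g y w) β) ↔ _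
      have step : ∀ w, KrF.holds F (Function.update g y w) β ↔
          dnfH F (Function.update g y w) (toDNF (elim β)) := fun w =>
        (elim_holds (φ := β) hA hbβ F _).trans (toDNF_correct (elim_qfree β))
      simp only [step, elim, ofDNF_holds]
      constructor
      · rintro ⟨w, hw, c, hc, hcH⟩
        exact ⟨exConj y l x c, List.mem_map.2 ⟨c, hc, rfl⟩,
          (exConj_correct (fun a ha => fun hy => hyS (hatoms c hc a ha hy))).1
            ⟨w, hw, hcH⟩⟩
      · rintro ⟨c', hc', hH⟩
        simp only [List.mem_map] at hc'
        obtain ⟨c, hc, rfl⟩ := hc'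
        obtain ⟨w, hw, hcH⟩ :=
          (exConj_correct (fun a ha => fun hy => hyS (hatoms c hc a ha hy))).2 hH
        exact ⟨w, hw, c, hc, hcH⟩
  | .all y l x β, hA, hb, F, g => by
      have hyS : y ∉ S := hb y (Set.mem_insert _ _)
      have hbβ : ∀ v ∈ β.bv, v ∉ S := fun v hv => hb v (Set.mem_insert_of_mem _ hv)
      have hatoms := atomsAll_toCNF (elim_qfree β) (elim_evars (φ := β) hA)
      show (∀ w, F.R l (g x) w → KrF.holds F (Function.update g y w) β) ↔ _
      have step : ∀ w, KrF.holds F (Function.update g y w) β ↔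
          cnfH F (Function.update g y w) (toCNF (elim β)) := fun w =>
        (elim_holds (φ := β) hA hbβ F _).trans (toCNF_correct (elim_qfree β))
      simp only [step, elim, ofCNF_holds]
      constructor
      · intro h c' hc'
        simp only [List.mem_map] at hc'
        obtain ⟨c, hc, rfl⟩ := hc'
        exact (allClause_correct (fun a ha => fun hy => hyS (hatoms c hc a ha hy))).1
          (fun w hw => h w hw c hc)
      · intro h w hw c hc
        exact (allClause_correct (fun a ha => fun hy => hyS (hatoms c hc a ha hy))).2
          (h (allClause y l x c) (List.mem_map.2 ⟨c, hc, rfl⟩)) w hw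

end S15


/-- quantifier elimination: a generalized Kracht formula with free variables
in whose atoms `y ∈ E` all variables of `E` are free is equivalent, in every Kripke frame
under every assignment, to a quantifier-free formula built from quasi-safe atoms using only
`∧` and `∨`. -/
theorem statement15 {Λ : Type u} (ψ : KrF Λ)
    (h₁ : IsGenKrachtFV ψ)
    (h₂ : ψ.AtomsAll fun E => E.evars ⊆ ψ.fv) :
    ∃ ψ' : KrF Λ, ψ'.QFree ∧ ψ'.AtomsAll QuasiSafe ∧
      ∀ (F : Frame Λ) (g : ℕ → F.W), KrF.holds F g ψ ↔ KrF.holds F g ψ' := by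
  refine ⟨S15.elim ψ, S15.elim_qfree ψ, S15.elim_quasiSafe h₁.2.1, ?_⟩
  intro F g
  refine S15.elim_holds h₂ ?_ F g
  intro v hv hvfv
  have h := h₁.1.1
  have : v ∈ ψ.fv ∩ ψ.bv := ⟨hvfv, hv⟩
  rw [h] at this
  exact this
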